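/- arXiv:1306.2710 — 3 statements merged into one kernel-verified Lean document; each statement's English description precedes it below -/
import Mathlib

section
/- Let b>0, 0≤d<b, r:=b-d, and define F(t) := 1 - 1/(1+(b/r)(e^{rt}-1)) for t≥0 (the node-depth distribution of the supercritical constant-rate birth–death process). For p∈(0,1], define π_∞(p) := p·∫₀^∞ (1-F(t))/(1-(1-p)F(t)) dt / ∫₀^∞ (1-F(t)) dt. Then: (i) if d>0 and bp≠r, π_∞(p) = (dp/(bp-r))·ln(bp/r)/ln(b/r); (ii) if d=0 (so b=r) and p<1, π_∞(p) = -p·ln(p)/(1-p); (iii) if d>0 and bp=r, π_∞(p) = -(1-p)/ln(p). -/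
open MeasureTheory Filter Set

/-- The node-depth CDF of a supercritical constant-rate birth–death process with speciation
rate `b` and extinction rate `d` (`r = b - d`): `F(t) = 1 - 1/(1+(b/r)(e^{rt}-1))`. -/
noncomputable def bdCDF (b d t : ℝ) : ℝ :=
  1 - 1 / (1 + (b / (b - d)) * (Real.exp ((b - d) * t) - 1))

/-- The large-time phylogenetic diversity ratio
`π_∞(p) = p ∫₀^∞ (1-F)/(1-(1-p)F) dt / ∫₀^∞ (1-F) dt` for the birth–death CDF. -/
noncomputable def piInfBD (b d p : ℝ) : ℝ :=
  (p * ∫ t in Set.Ioi (0:ℝ), (1 - bdCDF b d t) / (1 - (1 - p) * bdCDF b d t))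
    / ∫ t in Set.Ioi (0:ℝ), (1 - bdCDF b d t)

lemma integral_rAC (r A C : ℝ) (hr : 0 < r) (hA : 0 < A) (hAC : A + C = r) (hC : C ≠ 0) :
    ∫ t in Ioi (0:ℝ), r / (A * Real.exp (r * t) + C)
      = (Real.log r - Real.log A) / C := by
  have hpos : ∀ t : ℝ, 0 ≤ t → 0 < A * Real.exp (r * t) + C := by
    intro t ht
    have h1 : 1 ≤ Real.exp (r * t) := Real.one_le_exp (by positivity)
    nlinarith
  set g : ℝ → ℝ := fun t => (r * t - Real.log (A * Real.exp (r * t) + C)) / C with hg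
  have hderiv : ∀ x ∈ Ioi (0:ℝ), HasDerivAt g (r / (A * Real.exp (r * x) + C)) x := by
    intro x hx
    have hx0 : (0:ℝ) ≤ x := le_of_lt hx
    have hD : A * Real.exp (r * x) + C ≠ 0 := ne_of_gt (hpos x hx0)
    have h1 : HasDerivAt (fun t : ℝ => A * Real.exp (r * t) + C)
        (A * (Real.exp (r * x) * r)) x := by
      have := ((Real.hasDerivAt_exp (r * x)).comp x ((hasDerivAt_id x).const_mul r))
      simpa [mul_comm] using (this.const_mul A).add_const C
    have h2 : HasDerivAt (fun t : ℝ => r * t - Real.log (A * Real.exp (r * t) + C))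
        (r - A * (Real.exp (r * x) * r) / (A * Real.exp (r * x) + C)) x := by
      exact (((hasDerivAt_id x).const_mul r).sub (h1.log hD)).congr_deriv (by ring)
    have := h2.div_const C
    refine this.congr_deriv ?_
    field_simp
    ring
  have hcont : ContinuousWithinAt g (Ici (0:ℝ)) 0 := by
    have hD : A * Real.exp (r * 0) + C ≠ 0 := ne_of_gt (hpos 0 le_rfl)
    have c1 : ContinuousAt (fun t : ℝ => A * Real.exp (r * t) + C) 0 := by fun_prop
    have c3 : ContinuousAt (fun t : ℝ => Real.log (A * Real.exp (r * t) + C)) 0 := c1.log hD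
    have c2 : ContinuousAt g 0 :=
      ((continuousAt_id.const_mul r).sub c3).div_const C
    exact c2.continuousWithinAt
  have hnonneg : ∀ x ∈ Ioi (0:ℝ), 0 ≤ r / (A * Real.exp (r * x) + C) := by
    intro x hx
    exact le_of_lt (div_pos hr (hpos x (le_of_lt hx)))
  have htend : Tendsto g atTop (nhds (-(Real.log A) / C)) := by
    have key : ∀ᶠ t : ℝ in atTop, g t = -(Real.log (A + C * Real.exp (-(r * t)))) / C := by
      filter_upwards [eventually_ge_atTop (0:ℝ)] with t ht
      have he : Real.exp (r * t) ≠ 0 := (Real.exp_pos _).ne'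
      have h2 : A + C * Real.exp (-(r * t)) = (A * Real.exp (r * t) + C) * Real.exp (-(r * t)) := by
        rw [Real.exp_neg]; field_simp
      have h3 : Real.log (A + C * Real.exp (-(r * t)))
          = Real.log (A * Real.exp (r * t) + C) + -(r * t) := by
        rw [h2, Real.log_mul (ne_of_gt (hpos t ht)) (Real.exp_pos _).ne', Real.log_exp]
      simp only [hg, h3]
      ring
    have h_rhs : Tendsto (fun t : ℝ => -(Real.log (A + C * Real.exp (-(r * t)))) / C) atTop
        (nhds (-(Real.log A) / C)) := by
      apply Tendsto.div_const
      apply Tendsto.neg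
      have h0 : Tendsto (fun t : ℝ => A + C * Real.exp (-(r * t))) atTop (nhds (A + C * 0)) := by
        apply tendsto_const_nhds.add
        apply Tendsto.const_mul
        apply Real.tendsto_exp_atBot.comp
        exact (tendsto_neg_atBot_iff.mpr (tendsto_atTop_atTop_of_monotone
          (fun x y hxy => by nlinarith) (fun c => ⟨max 1 (c / r), by
            have := le_max_left 1 (c/r); have := le_max_right 1 (c/r)
            calc c = r * (c / r) := by field_simp
              _ ≤ r * max 1 (c / r) := by nlinarith⟩)))
      have : Tendsto (fun t : ℝ => Real.log (A + C * Real.exp (-(r * t)))) atTop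
          (nhds (Real.log A)) := by
        have := (Real.continuousAt_log (by simpa using hA.ne')).tendsto.comp (by simpa using h0)
        exact this
      exact this
    exact Tendsto.congr' (key.mono fun t h => h.symm) h_rhs
  have := MeasureTheory.integral_Ioi_of_hasDerivAt_of_nonneg hcont hderiv hnonneg htend
  rw [this]
  have hg0 : g 0 = -(Real.log (A + C)) / C := by simp [hg]
  rw [hg0, hAC]
  ring


lemma integral_rr (r : ℝ) (hr : 0 < r) :
    ∫ t in Ioi (0:ℝ), r / (r * Real.exp (r * t)) = 1 / r := by
  have hcongr : EqOn (fun t : ℝ => r / (r * Real.exp (r * t)))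
      (fun t : ℝ => Real.exp (-(r * t))) (Ioi 0) := by
    intro t _
    simp only [Real.exp_neg]
    field_simp
  rw [MeasureTheory.setIntegral_congr_fun measurableSet_Ioi hcongr]
  have hg : ∀ x ∈ Ioi (0:ℝ), HasDerivAt (fun t : ℝ => -Real.exp (-(r * t)) / r)
      (Real.exp (-(r * x))) x := by
    intro x _
    have h1 : HasDerivAt (fun t : ℝ => Real.exp (-(r * t))) (Real.exp (-(r * x)) * (-r)) x := by
      have := (Real.hasDerivAt_exp (-(r * x))).comp x (((hasDerivAt_id x).const_mul r).neg)
      exact this.congr_deriv (by ring)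
    have := (h1.neg).div_const r
    refine this.congr_deriv ?_
    field_simp
  have hcont : ContinuousWithinAt (fun t : ℝ => -Real.exp (-(r * t)) / r) (Ici (0:ℝ)) 0 :=
    (((Real.continuous_exp.comp (continuous_const.mul continuous_id).neg).neg.div_const r)).continuousWithinAt
  have hnonneg : ∀ x ∈ Ioi (0:ℝ), 0 ≤ Real.exp (-(r * x)) := fun x _ => (Real.exp_pos _).le
  have htend : Tendsto (fun t : ℝ => -Real.exp (-(r * t)) / r) atTop (nhds 0) := by
    have h0 : Tendsto (fun t : ℝ => Real.exp (-(r * t))) atTop (nhds 0) := by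
      apply Real.tendsto_exp_atBot.comp
      exact tendsto_neg_atBot_iff.mpr (tendsto_atTop_atTop_of_monotone
        (fun x y hxy => by nlinarith) (fun c => ⟨max 1 (c / r), by
          have := le_max_left 1 (c/r); have := le_max_right 1 (c/r)
          calc c = r * (c / r) := by field_simp
            _ ≤ r * max 1 (c / r) := by nlinarith⟩))
    simpa using (h0.neg).div_const r
  have := MeasureTheory.integral_Ioi_of_hasDerivAt_of_nonneg hcont hg hnonneg htend
  rw [this]
  simp [neg_div]

lemma bdCDF_pt (b d : ℝ) (hb : 0 < b) (hd : 0 ≤ d) (hdb : d < b)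
    (p : ℝ) (hp0 : 0 < p) (hp1 : p ≤ 1) (t : ℝ) (ht : 0 ≤ t) :
    (1 - bdCDF b d t = (b - d) / (b * Real.exp ((b - d) * t) + -d)) ∧
    ((1 - bdCDF b d t) / (1 - (1 - p) * bdCDF b d t)
      = (b - d) / (b * p * Real.exp ((b - d) * t) + ((b - d) - b * p))) := by
  have hr : 0 < b - d := sub_pos.mpr hdb
  have hE : 1 ≤ Real.exp ((b - d) * t) := Real.one_le_exp (by positivity)
  set E := Real.exp ((b - d) * t) with hEdef
  have hD : 0 < b * E - d := by nlinarith
  have hN : 0 < b * p * E + ((b - d) - b * p) := by nlinarith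
  have hF : bdCDF b d t = 1 - (b - d) / (b * E - d) := by
    rw [bdCDF]
    have h1 : 1 + (b / (b - d)) * (E - 1) = (b * E - d) / (b - d) := by
      field_simp
      ring
    rw [h1, one_div_div]
  constructor
  · rw [hF]
    have : b * E + -d = b * E - d := by ring
    rw [this]
    ring
  · have h2 : 1 - (1 - p) * (1 - (b - d) / (b * E - d))
        = (b * p * E + ((b - d) - b * p)) / (b * E - d) := by
      field_simp
      ring
    have h3 : 1 - (1 - (b - d) / (b * E - d)) = (b - d) / (b * E - d) := by ring
    rw [hF, h2, h3, div_div_div_comm, div_self hD.ne', div_one]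



lemma alg_aux (p d bp r lbp lb lr : ℝ) (hu : bp - r ≠ 0) (hu' : r - bp ≠ 0)
    (hL2 : lb - lr ≠ 0) (hd : d ≠ 0) :
    p * ((lr - lbp) / (r - bp)) / ((lr - lb) / (-d))
      = d * p / (bp - r) * (lbp - lr) / (lb - lr) := by
  have hL2' : lr - lb ≠ 0 := sub_ne_zero.mpr (Ne.symm (sub_ne_zero.mp hL2))
  have e1 : p * ((lr - lbp) / (r - bp)) / ((lr - lb) / (-d))
      = (p * (lr - lbp) * -d) / ((r - bp) * (lr - lb)) := by
    rw [div_div_eq_mul_div, mul_div_assoc', div_mul_eq_mul_div, div_div]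
  have e2 : d * p / (bp - r) * (lbp - lr) / (lb - lr)
      = (d * p * (lbp - lr)) / ((bp - r) * (lb - lr)) := by
    rw [div_mul_eq_mul_div, div_div]
  rw [e1, e2, div_eq_div_iff (mul_ne_zero hu' hL2') (mul_ne_zero hu hL2)]
  ring

/-- explicit values of `π_∞(p)` for the supercritical constant-rate
birth–death process with speciation rate `b`, extinction rate `d`, `r = b - d > 0`. -/
theorem piInf_birth_death_explicit
    (b d : ℝ) (hb : 0 < b) (hd : 0 ≤ d) (hdb : d < b)
    (p : ℝ) (hp : p ∈ Set.Ioc (0 : ℝ) 1) :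
    (0 < d → b * p ≠ b - d →
      piInfBD b d p
        = (d * p / (b * p - (b - d))) * Real.log (b * p / (b - d)) / Real.log (b / (b - d))) ∧
    (d = 0 → p < 1 → piInfBD b d p = -(p * Real.log p) / (1 - p)) ∧
    (0 < d → b * p = b - d → piInfBD b d p = -(1 - p) / Real.log p) := by
  obtain ⟨hp0, hp1⟩ := hp
  have hr : 0 < b - d := sub_pos.mpr hdb
  have hbp : 0 < b * p := mul_pos hb hp0
  have hden_eq : (∫ t in Set.Ioi (0:ℝ), (1 - bdCDF b d t))
      = ∫ t in Set.Ioi (0:ℝ), (b - d) / (b * Real.exp ((b - d) * t) + -d) :=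
    MeasureTheory.setIntegral_congr_fun measurableSet_Ioi
      (fun t ht => (bdCDF_pt b d hb hd hdb p hp0 hp1 t (le_of_lt ht)).1)
  have hnum_eq : (∫ t in Set.Ioi (0:ℝ), (1 - bdCDF b d t) / (1 - (1 - p) * bdCDF b d t))
      = ∫ t in Set.Ioi (0:ℝ),
          (b - d) / (b * p * Real.exp ((b - d) * t) + ((b - d) - b * p)) :=
    MeasureTheory.setIntegral_congr_fun measurableSet_Ioi
      (fun t ht => (bdCDF_pt b d hb hd hdb p hp0 hp1 t (le_of_lt ht)).2)
  have hlb : Real.log (b - d) ≤ Real.log b := Real.log_le_log hr (by linarith)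
  refine ⟨?_, ?_, ?_⟩
  · intro hd' hne
    have hden : (∫ t in Set.Ioi (0:ℝ), (b - d) / (b * Real.exp ((b - d) * t) + -d))
        = (Real.log (b - d) - Real.log b) / (-d) :=
      integral_rAC (b - d) b (-d) hr hb (by ring) (by simpa using hd'.ne')
    have hnum : (∫ t in Set.Ioi (0:ℝ),
          (b - d) / (b * p * Real.exp ((b - d) * t) + ((b - d) - b * p)))
        = (Real.log (b - d) - Real.log (b * p)) / ((b - d) - b * p) :=
      integral_rAC (b - d) (b * p) ((b - d) - b * p) hr hbp (by ring)
        (sub_ne_zero.mpr (Ne.symm hne))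
    rw [piInfBD, hden_eq, hnum_eq, hden, hnum]
    have hlb2 : Real.log (b - d) < Real.log b := Real.log_lt_log hr (by linarith)
    have hlog_ne : Real.log b - Real.log (b - d) ≠ 0 := sub_ne_zero.mpr (ne_of_gt hlb2)
    rw [Real.log_div hbp.ne' hr.ne', Real.log_div hb.ne' hr.ne']
    have h1 : b * p - (b - d) ≠ 0 := sub_ne_zero.mpr hne
    have h2 : (b - d) - b * p ≠ 0 := sub_ne_zero.mpr (Ne.symm hne)
    exact alg_aux p d (b * p) (b - d) (Real.log (b * p)) (Real.log b) (Real.log (b - d))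
      h1 h2 hlog_ne hd'.ne'
  · intro hd0 hlt
    subst hd0
    have hC : (b - 0) - b * p ≠ 0 := by
      have : 0 < b * (1 - p) := mul_pos hb (by linarith)
      intro h; rw [sub_zero] at h; nlinarith
    have hnum : (∫ t in Set.Ioi (0:ℝ),
          (b - 0) / (b * p * Real.exp ((b - 0) * t) + ((b - 0) - b * p)))
        = (Real.log (b - 0) - Real.log (b * p)) / ((b - 0) - b * p) :=
      integral_rAC (b - 0) (b * p) ((b - 0) - b * p) hr hbp (by ring) hC
    have hden : (∫ t in Set.Ioi (0:ℝ), (b - 0) / (b * Real.exp ((b - 0) * t) + -0))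
        = 1 / b := by
      rw [← integral_rr b hb]
      apply MeasureTheory.setIntegral_congr_fun measurableSet_Ioi
      intro t _
      norm_num
    rw [piInfBD, hden_eq, hnum_eq, hden, hnum]
    simp only [sub_zero]
    rw [Real.log_mul hb.ne' hp0.ne']
    have hC' : b - b * p ≠ 0 := by rw [sub_zero] at hC; exact hC
    have h1p : (1 : ℝ) - p ≠ 0 := by intro h; nlinarith
    field_simp
    ring
  · intro hd' heq
    have hden : (∫ t in Set.Ioi (0:ℝ), (b - d) / (b * Real.exp ((b - d) * t) + -d))
        = (Real.log (b - d) - Real.log b) / (-d) :=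
      integral_rAC (b - d) b (-d) hr hb (by ring) (by simpa using hd'.ne')
    have hnum : (∫ t in Set.Ioi (0:ℝ),
          (b - d) / (b * p * Real.exp ((b - d) * t) + ((b - d) - b * p)))
        = 1 / (b - d) := by
      rw [← integral_rr (b - d) hr]
      apply MeasureTheory.setIntegral_congr_fun measurableSet_Ioi
      intro t _
      simp [heq]
    rw [piInfBD, hden_eq, hnum_eq, hden, hnum]
    have hpe : p = (b - d) / b := by
      field_simp
      linarith [heq]
    have hlogp : Real.log p = Real.log (b - d) - Real.log b := by
      rw [hpe, Real.log_div hr.ne' hb.ne']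
    rw [hlogp]
    have hlb2 : Real.log (b - d) < Real.log b := Real.log_lt_log hr (by linarith)
    have hlog_ne : Real.log (b - d) - Real.log b ≠ 0 := sub_ne_zero.mpr (ne_of_lt hlb2)
    have hd0 : d ≠ 0 := hd'.ne'
    field_simp
    linear_combination (-1 : ℝ) * heq
end

section
/- Let T>0 and let G:[0,T]→[0,1] be a nondecreasing right-continuous function with G(0)=0, G(T)=1 and ∫₀^T(1-G(t))dt > 0. Define π(p) := p·∫₀^T (1-G(t))/(1-(1-p)G(t)) dt / ∫₀^T (1-G(t)) dt for p∈(0,1]. Then for every p∈(0,1), π is twice differentiable at p with second derivative π''(p) = -2·∫₀^T G(t)(1-G(t))²/(1-(1-p)G(t))³ dt / ∫₀^T (1-G(t)) dt. In particular, if the set {t∈[0,T] : 0<G(t)<1} has positive Lebesgue measure, then π''(p)<0 for all p∈(0,1), i.e. π is strictly concave on (0,1). -/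
open MeasureTheory Filter Set

/-- The phylogenetic diversity ratio
`π(p) = p ∫₀^T (1-G)/(1-(1-p)G) dt / ∫₀^T (1-G) dt`. -/
noncomputable def pdRatio (G : ℝ → ℝ) (T p : ℝ) : ℝ :=
  p * (∫ t in (0:ℝ)..T, (1 - G t) / (1 - (1 - p) * G t)) / ∫ t in (0:ℝ)..T, (1 - G t)

/-- The derivative of the phylogenetic diversity ratio:
`π'(p) = ∫₀^T ((1-G)/(1-(1-p)G))² dt / ∫₀^T (1-G) dt`. -/
noncomputable def pdRatioDeriv (G : ℝ → ℝ) (T p : ℝ) : ℝ :=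
  (∫ t in (0:ℝ)..T, ((1 - G t) / (1 - (1 - p) * G t)) ^ 2) / ∫ t in (0:ℝ)..T, (1 - G t)

/-- The second derivative of the phylogenetic diversity ratio:
`π''(p) = -2 ∫₀^T G(1-G)²/(1-(1-p)G)³ dt / ∫₀^T (1-G) dt`. -/
noncomputable def pdRatioDeriv2 (G : ℝ → ℝ) (T p : ℝ) : ℝ :=
  -2 * (∫ t in (0:ℝ)..T, G t * (1 - G t) ^ 2 / (1 - (1 - p) * G t) ^ 3)
    / ∫ t in (0:ℝ)..T, (1 - G t)

lemma pd_denom_pos {g x : ℝ} (hx : 0 < x) (hg0 : 0 ≤ g) (hg1 : g ≤ 1) :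
    0 < 1 - (1 - x) * g := by
  rcases le_or_gt (1 - x) 0 with h | h
  · nlinarith
  · nlinarith

lemma pd_denom_ge {g x c : ℝ} (hg0 : 0 ≤ g) (hg1 : g ≤ 1) (hc1 : c ≤ 1) (hx : c < x) :
    c ≤ 1 - (1 - x) * g := by
  nlinarith [mul_nonneg (sub_nonneg.2 hc1) (sub_nonneg.2 hg1),
    mul_le_mul_of_nonneg_right hx.le hg0]

lemma pd_hasDerivAt_denom (g x : ℝ) : HasDerivAt (fun y : ℝ => 1 - (1 - y) * g) g x := by
  have h := (((hasDerivAt_id x).const_sub 1).mul_const g).const_sub 1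
  simpa using h

lemma pd_hasDerivAt_aux1 {g x : ℝ} (hd : 1 - (1 - x) * g ≠ 0) :
    HasDerivAt (fun y => y * ((1 - g) / (1 - (1 - y) * g)))
      (((1 - g) / (1 - (1 - x) * g)) ^ 2) x := by
  have hnum : HasDerivAt (fun y : ℝ => y * (1 - g)) (1 - g) x := by
    simpa using (hasDerivAt_id x).mul_const (1 - g)
  have h := hnum.div (pd_hasDerivAt_denom g x) hd
  have heq : (fun y => y * ((1 - g) / (1 - (1 - y) * g)))
      = fun y => y * (1 - g) / (1 - (1 - y) * g) := by
    funext y; ring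
  rw [heq]
  refine h.congr_deriv ?_
  field_simp
  ring

lemma pd_hasDerivAt_aux2 {g x : ℝ} (hd : 1 - (1 - x) * g ≠ 0) :
    HasDerivAt (fun y => ((1 - g) / (1 - (1 - y) * g)) ^ 2)
      (-2 * (g * (1 - g) ^ 2 / (1 - (1 - x) * g) ^ 3)) x := by
  have h1 := (hasDerivAt_const x (1 - g)).div (pd_hasDerivAt_denom g x) hd
  have h := h1.pow 2
  refine h.congr_deriv ?_
  simp only [Pi.div_apply]
  norm_num
  field_simp

lemma pd_main_aux (T : ℝ) (hT : 0 < T) (G : ℝ → ℝ)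
    (hGmono : MonotoneOn G (Set.Icc 0 T))
    (hGrange : ∀ t ∈ Set.Icc 0 T, G t ∈ Set.Icc (0:ℝ) 1)
    {p : ℝ} (hp : p ∈ Set.Ioo (0:ℝ) 1) :
    HasDerivAt (fun x => ∫ t in (0:ℝ)..T, x * ((1 - G t) / (1 - (1 - x) * G t)))
        (∫ t in (0:ℝ)..T, ((1 - G t) / (1 - (1 - p) * G t)) ^ 2) p ∧
    HasDerivAt (fun x => ∫ t in (0:ℝ)..T, ((1 - G t) / (1 - (1 - x) * G t)) ^ 2)
        (∫ t in (0:ℝ)..T, -2 * (G t * (1 - G t) ^ 2 / (1 - (1 - p) * G t) ^ 3)) p ∧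
    IntervalIntegrable (fun t => -2 * (G t * (1 - G t) ^ 2 / (1 - (1 - p) * G t) ^ 3))
      volume 0 T := by
  obtain ⟨hp0, hp1⟩ := hp
  set c : ℝ := p / 2 with hc
  have hc0 : 0 < c := by positivity
  have hc1 : c ≤ 1 := by simp only [hc]; linarith
  have hIoc : Set.uIoc (0:ℝ) T = Set.Ioc 0 T := Set.uIoc_of_le hT.le
  have hmemIcc : ∀ t ∈ Set.uIoc (0:ℝ) T, G t ∈ Set.Icc (0:ℝ) 1 := by
    intro t ht
    rw [hIoc] at ht
    exact hGrange t (Set.Ioc_subset_Icc_self ht)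
  have hball : ∀ x ∈ Metric.ball p c, c < x := by
    intro x hx
    rw [Real.ball_eq_Ioo] at hx
    have := hx.1
    simp only [hc] at this ⊢
    linarith
  -- measurability of G
  have hGm : AEMeasurable G (volume.restrict (Set.uIoc (0:ℝ) T)) := by
    rw [hIoc]
    exact (aemeasurable_restrict_of_monotoneOn measurableSet_Icc hGmono).mono_measure
      (Measure.restrict_mono Set.Ioc_subset_Icc_self le_rfl)
  have hF_meas : ∀ x : ℝ, AEStronglyMeasurable
      (fun t => x * ((1 - G t) / (1 - (1 - x) * G t)))
      (volume.restrict (Set.uIoc (0:ℝ) T)) := fun x =>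
    (((aemeasurable_const.sub hGm).div
      (aemeasurable_const.sub (aemeasurable_const.mul hGm))).const_mul x).aestronglyMeasurable
  have hF2_meas : ∀ x : ℝ, AEStronglyMeasurable
      (fun t => ((1 - G t) / (1 - (1 - x) * G t)) ^ 2)
      (volume.restrict (Set.uIoc (0:ℝ) T)) := fun x =>
    (((aemeasurable_const.sub hGm).div
      (aemeasurable_const.sub (aemeasurable_const.mul hGm))).pow aemeasurable_const
      ).aestronglyMeasurable
  have hF3_meas : AEStronglyMeasurable
      (fun t => -2 * (G t * (1 - G t) ^ 2 / (1 - (1 - p) * G t) ^ 3))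
      (volume.restrict (Set.uIoc (0:ℝ) T)) :=
    (((hGm.mul ((aemeasurable_const.sub hGm).pow aemeasurable_const)).div
      ((aemeasurable_const.sub (aemeasurable_const.mul hGm)).pow aemeasurable_const)
      ).const_mul (-2)).aestronglyMeasurable
  -- integrability of F p
  have hF_int : IntervalIntegrable (fun t => p * ((1 - G t) / (1 - (1 - p) * G t)))
      volume 0 T := by
    rw [intervalIntegrable_iff, hIoc]
    refine Integrable.mono' ((integrableOn_const_iff (C := p * (1/c))).2 (Or.inr measure_Ioc_lt_top)) ?_ ?_
    · have h := hF_meas p; rwa [hIoc] at h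
    · refine (ae_restrict_iff' measurableSet_Ioc).2 (Filter.Eventually.of_forall ?_)
      intro t ht
      obtain ⟨hg0, hg1⟩ := hGrange t (Set.Ioc_subset_Icc_self ht)
      have hd : c ≤ 1 - (1 - p) * G t := pd_denom_ge hg0 hg1 hc1 (by simp [hc]; linarith)
      have hdpos : 0 < 1 - (1 - p) * G t := lt_of_lt_of_le hc0 hd
      have h1 : (1 - G t) / (1 - (1 - p) * G t) ≤ 1 / c :=
        div_le_div₀ (by norm_num) (by linarith) hc0 hd
      have h2 : 0 ≤ (1 - G t) / (1 - (1 - p) * G t) :=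
        div_nonneg (by linarith) hdpos.le
      rw [Real.norm_eq_abs, abs_mul, abs_of_pos hp0, abs_of_nonneg h2]
      exact mul_le_mul_of_nonneg_left h1 hp0.le
  -- first application
  have key1 := intervalIntegral.hasDerivAt_integral_of_dominated_loc_of_deriv_le
    (F := fun x t => x * ((1 - G t) / (1 - (1 - x) * G t)))
    (F' := fun x t => ((1 - G t) / (1 - (1 - x) * G t)) ^ 2)
    (bound := fun _ => (1 / c) ^ 2) (μ := volume) (a := 0) (b := T) (x₀ := p) (s := Metric.ball p c)
    (Metric.ball_mem_nhds p hc0) (Filter.Eventually.of_forall hF_meas) hF_int (hF2_meas p)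
    (Filter.Eventually.of_forall ?_) (intervalIntegrable_const)
    (Filter.Eventually.of_forall ?_)
  rotate_left
  · intro t ht x hx
    obtain ⟨hg0, hg1⟩ := hmemIcc t ht
    have hd : c ≤ 1 - (1 - x) * G t := pd_denom_ge hg0 hg1 hc1 (hball x hx)
    have h1 : (1 - G t) / (1 - (1 - x) * G t) ≤ 1 / c :=
      div_le_div₀ (by norm_num) (by linarith) hc0 hd
    have h2 : 0 ≤ (1 - G t) / (1 - (1 - x) * G t) :=
      div_nonneg (by linarith) (by linarith)
    rw [Real.norm_eq_abs, abs_of_nonneg (by positivity)]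
    exact pow_le_pow_left₀ h2 h1 2
  · intro t ht x hx
    obtain ⟨hg0, hg1⟩ := hmemIcc t ht
    have hd : 0 < 1 - (1 - x) * G t :=
      lt_of_lt_of_le hc0 (pd_denom_ge hg0 hg1 hc1 (hball x hx))
    exact pd_hasDerivAt_aux1 hd.ne'
  -- second application
  have key2 := intervalIntegral.hasDerivAt_integral_of_dominated_loc_of_deriv_le
    (F := fun x t => ((1 - G t) / (1 - (1 - x) * G t)) ^ 2)
    (F' := fun x t => -2 * (G t * (1 - G t) ^ 2 / (1 - (1 - x) * G t) ^ 3))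
    (bound := fun _ => 2 / c ^ 3) (μ := volume) (a := 0) (b := T) (x₀ := p) (s := Metric.ball p c)
    (Metric.ball_mem_nhds p hc0) (Filter.Eventually.of_forall hF2_meas) key1.1 hF3_meas
    (Filter.Eventually.of_forall ?_) (intervalIntegrable_const)
    (Filter.Eventually.of_forall ?_)
  rotate_left
  · intro t ht x hx
    obtain ⟨hg0, hg1⟩ := hmemIcc t ht
    have hd : c ≤ 1 - (1 - x) * G t := pd_denom_ge hg0 hg1 hc1 (hball x hx)
    have hdpos : 0 < 1 - (1 - x) * G t := lt_of_lt_of_le hc0 hd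
    have h1 : G t * (1 - G t) ^ 2 / (1 - (1 - x) * G t) ^ 3 ≤ 1 / c ^ 3 :=
      div_le_div₀ (by norm_num) (by nlinarith) (by positivity)
        (pow_le_pow_left₀ hc0.le hd 3)
    have h2 : 0 ≤ G t * (1 - G t) ^ 2 / (1 - (1 - x) * G t) ^ 3 :=
      div_nonneg (by positivity) (by positivity)
    rw [Real.norm_eq_abs, abs_mul]
    rw [abs_of_nonpos (by norm_num : (-2:ℝ) ≤ 0)]  -- |-2| = 2
    rw [abs_of_nonneg h2]
    calc (-(-2)) * (G t * (1 - G t) ^ 2 / (1 - (1 - x) * G t) ^ 3)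
        ≤ 2 * (1 / c ^ 3) := by
          have h3 := mul_le_mul_of_nonneg_left h1 (by norm_num : (0:ℝ) ≤ 2)
          linarith
      _ = 2 / c ^ 3 := by ring
  · intro t ht x hx
    obtain ⟨hg0, hg1⟩ := hmemIcc t ht
    have hd : 0 < 1 - (1 - x) * G t :=
      lt_of_lt_of_le hc0 (pd_denom_ge hg0 hg1 hc1 (hball x hx))
    exact pd_hasDerivAt_aux2 hd.ne'
  exact ⟨key1.2, key2.2, key2.1⟩

/-- on `(0,1)` the PD ratio `π` is twice differentiable with second derivative
`π''(p) = -2 ∫₀^T G(1-G)²/(1-(1-p)G)³ dt / ∫₀^T (1-G) dt`; if moreover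
`{t ∈ [0,T] : 0 < G t < 1}` has positive Lebesgue measure then `π''(p) < 0` on `(0,1)`,
i.e. `π` is strictly concave on `(0,1)`. -/
theorem pdRatio_second_derivative_and_concavity
    (T : ℝ) (hT : 0 < T) (G : ℝ → ℝ)
    (hGmono : MonotoneOn G (Set.Icc 0 T))
    (hGrc : ∀ t ∈ Set.Ico 0 T, ContinuousWithinAt G (Set.Ici t) t)
    (hGrange : ∀ t ∈ Set.Icc 0 T, G t ∈ Set.Icc (0:ℝ) 1)
    (hG0 : G 0 = 0) (hGT : G T = 1)
    (hInt : 0 < ∫ t in (0:ℝ)..T, (1 - G t)) :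
    (∀ p ∈ Set.Ioo (0:ℝ) 1,
      HasDerivAt (pdRatio G T) (pdRatioDeriv G T p) p ∧
      HasDerivAt (pdRatioDeriv G T) (pdRatioDeriv2 G T p) p) ∧
    (0 < volume {t : ℝ | t ∈ Set.Icc 0 T ∧ 0 < G t ∧ G t < 1} →
      (∀ p ∈ Set.Ioo (0:ℝ) 1, pdRatioDeriv2 G T p < 0) ∧
      StrictConcaveOn ℝ (Set.Ioo (0:ℝ) 1) (pdRatio G T)) := by
  have hmain : ∀ p ∈ Set.Ioo (0:ℝ) 1,
      HasDerivAt (pdRatio G T) (pdRatioDeriv G T p) p ∧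
      HasDerivAt (pdRatioDeriv G T) (pdRatioDeriv2 G T p) p := by
    intro p hp
    obtain ⟨h1, h2, _⟩ := pd_main_aux T hT G hGmono hGrange hp
    constructor
    · have h := h1.div_const (∫ t in (0:ℝ)..T, (1 - G t))
      have heq : (fun x => (∫ t in (0:ℝ)..T, x * ((1 - G t) / (1 - (1 - x) * G t)))
          / ∫ t in (0:ℝ)..T, (1 - G t)) = pdRatio G T := by
        funext x
        simp only [pdRatio]
        rw [← intervalIntegral.integral_const_mul]
      rw [heq] at h
      exact h
    · have h := h2.div_const (∫ t in (0:ℝ)..T, (1 - G t))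
      rw [intervalIntegral.integral_const_mul] at h
      exact h
  refine ⟨hmain, fun hvol => ?_⟩
  have hneg : ∀ p ∈ Set.Ioo (0:ℝ) 1, pdRatioDeriv2 G T p < 0 := by
    intro p hp
    obtain ⟨_, _, h3⟩ := pd_main_aux T hT G hGmono hGrange hp
    have hint : IntervalIntegrable
        (fun t => G t * (1 - G t) ^ 2 / (1 - (1 - p) * G t) ^ 3) volume 0 T := by
      have h4 := h3.const_mul (-(1:ℝ)/2)
      have heq : (fun t => (-(1:ℝ)/2) * (-2 * (G t * (1 - G t) ^ 2 / (1 - (1 - p) * G t) ^ 3)))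
          = fun t => G t * (1 - G t) ^ 2 / (1 - (1 - p) * G t) ^ 3 := by
        funext t; ring
      rwa [heq] at h4
    have hnonneg : 0 ≤ᵐ[volume.restrict (Set.uIoc (0:ℝ) T)]
        fun t => G t * (1 - G t) ^ 2 / (1 - (1 - p) * G t) ^ 3 := by
      refine (ae_restrict_iff' measurableSet_uIoc).2 (Filter.Eventually.of_forall ?_)
      intro t ht
      rw [Set.uIoc_of_le hT.le] at ht
      obtain ⟨hg0, hg1⟩ := hGrange t (Set.Ioc_subset_Icc_self ht)
      have hd := pd_denom_pos hp.1 hg0 hg1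
      positivity
    have hJ : 0 < ∫ t in (0:ℝ)..T, G t * (1 - G t) ^ 2 / (1 - (1 - p) * G t) ^ 3 := by
      rw [intervalIntegral.integral_pos_iff_support_of_nonneg_ae' hnonneg hint]
      refine ⟨hT, lt_of_lt_of_le hvol (measure_mono ?_)⟩
      rintro t ⟨htI, hg0, hg1⟩
      have ht0 : t ≠ 0 := by
        rintro rfl
        rw [hG0] at hg0
        exact lt_irrefl 0 hg0
      refine ⟨?_, lt_of_le_of_ne htI.1 (Ne.symm ht0), htI.2⟩
      have hd := pd_denom_pos hp.1 hg0.le hg1.le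
      have : 0 < G t * (1 - G t) ^ 2 / (1 - (1 - p) * G t) ^ 3 :=
        div_pos (mul_pos hg0 (pow_pos (by linarith) 2)) (pow_pos hd 3)
      exact this.ne'
    have : -2 * (∫ t in (0:ℝ)..T, G t * (1 - G t) ^ 2 / (1 - (1 - p) * G t) ^ 3) < 0 := by
      linarith
    exact div_neg_of_neg_of_pos this hInt
  refine ⟨hneg, ?_⟩
  apply strictConcaveOn_of_deriv2_neg (convex_Ioo 0 1)
  · intro x hx
    exact ((hmain x hx).1).continuousAt.continuousWithinAt
  · intro x hx
    rw [interior_Ioo] at hx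
    have hD : deriv (pdRatio G T) =ᶠ[nhds x] pdRatioDeriv G T :=
      Filter.eventually_of_mem (isOpen_Ioo.mem_nhds hx) (fun y hy => ((hmain y hy).1).deriv)
    have h2 : deriv^[2] (pdRatio G T) x = deriv (pdRatioDeriv G T) x := by
      show deriv (deriv (pdRatio G T)) x = _
      exact hD.deriv_eq
    rw [h2, ((hmain x hx).2).deriv]
    exact hneg x hx
end

section
/- Let T>0 and let G:[0,T]→[0,1] be a nondecreasing right-continuous function with G(0)=0, G(T)=1, ∫₀^T(1-G(t))dt > 0 and ∫₀^T G(t)(1-G(t))dt > 0. Define π(p) := p·∫₀^T (1-G(t))/(1-(1-p)G(t)) dt / ∫₀^T (1-G(t)) dt for p∈(0,1], with derivative π'(p) = ∫₀^T [(1-G(t))/(1-(1-p)G(t))]² dt / ∫₀^T (1-G(t)) dt. Then there exists a unique p*∈(0,1) such that π'(p*) = 1; moreover π'(p) > 1 for p∈(0,p*) and π'(p) < 1 for p∈(p*,1). -/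
open MeasureTheory Filter Set

private lemma pd_aux_anti (p x y : ℝ) (hp : 0 < p) (hp1 : p ≤ 1)
    (hx0 : 0 ≤ x) (hy1 : y ≤ 1) (hxy : x ≤ y) :
    ((1 - y) / (1 - (1 - p) * y)) ^ 2 ≤ ((1 - x) / (1 - (1 - p) * x)) ^ 2 := by
  have hx1 : x ≤ 1 := hxy.trans hy1
  have hds : 0 < 1 - (1 - p) * x := by nlinarith
  have hdt : 0 < 1 - (1 - p) * y := by nlinarith
  have h1 : (1 - y) / (1 - (1 - p) * y) ≤ (1 - x) / (1 - (1 - p) * x) := by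
    rw [div_le_div_iff₀ hdt hds]; nlinarith
  have h2 : 0 ≤ (1 - y) / (1 - (1 - p) * y) := div_nonneg (by linarith) hdt.le
  exact pow_le_pow_left₀ h2 h1 2

private lemma pd_aux_mono (p q x : ℝ) (hp : 0 < p) (hpq : p < q) (hq1 : q ≤ 1)
    (hx0 : 0 ≤ x) (hx1 : x ≤ 1) :
    ((1 - x) / (1 - (1 - q) * x)) ^ 2 + (q - p) * p * (x * (1 - x) ^ 2)
      ≤ ((1 - x) / (1 - (1 - p) * x)) ^ 2 := by
  have hq : 0 < q := hp.trans hpq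
  have hdp : p ≤ 1 - (1 - p) * x := by nlinarith
  have hdq : q ≤ 1 - (1 - q) * x := by nlinarith
  have hdp0 : 0 < 1 - (1 - p) * x := hp.trans_le hdp
  have hdq0 : 0 < 1 - (1 - q) * x := hq.trans_le hdq
  have hu0 : 0 ≤ 1 - x := by linarith
  set A := (1 - x) / (1 - (1 - p) * x) with hA
  set B := (1 - x) / (1 - (1 - q) * x) with hB
  have hB0 : 0 ≤ B := div_nonneg hu0 hdq0.le
  have hc0 : 0 ≤ (q - p) * x * (1 - x) :=
    mul_nonneg (mul_nonneg (by linarith) hx0) hu0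
  have hABsub : (q - p) * x * (1 - x) ≤ A - B := by
    rw [hA, hB, div_sub_div _ _ (ne_of_gt hdp0) (ne_of_gt hdq0),
      le_div_iff₀ (by positivity)]
    have hdp1 : 1 - (1 - p) * x ≤ 1 := by nlinarith [mul_nonneg (by linarith : (0:ℝ) ≤ 1 - p) hx0]
    have hdq1 : 1 - (1 - q) * x ≤ 1 := by nlinarith [mul_nonneg (by linarith : (0:ℝ) ≤ 1 - q) hx0]
    have hD1 : (1 - (1 - p) * x) * (1 - (1 - q) * x) ≤ 1 :=
      mul_le_one₀ hdp1 hdq0.le hdq1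
    nlinarith [mul_le_of_le_one_right hc0 hD1]
  have hAu : 1 - x ≤ A := by
    rw [hA, le_div_iff₀ hdp0]; nlinarith
  have hAB0 : 0 ≤ A - B := hc0.trans hABsub
  have key2 : ((q - p) * x * (1 - x)) * (1 - x) ≤ (A - B) * (A + B) :=
    mul_le_mul hABsub (by linarith) hu0 hAB0
  have hslack : 0 ≤ (q - p) * x * ((1 - x) * (1 - x)) * (1 - p) :=
    mul_nonneg (mul_nonneg (mul_nonneg (by linarith) hx0)
      (mul_nonneg hu0 hu0)) (by linarith)
  nlinarith [key2, hslack]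

private lemma pd_aux_low (p x : ℝ) (hp : 0 < p) (hp2 : p ≤ 1 / 2)
    (hx0 : 0 ≤ x) (hx1 : x ≤ 1) :
    (1 - x) + (1 - 2 * p) * (x * (1 - x) ^ 2) - 2 * p
      ≤ ((1 - x) / (1 - (1 - p) * x)) ^ 2 := by
  have hd : p ≤ 1 - (1 - p) * x := by nlinarith
  have hd0 : 0 < 1 - (1 - p) * x := hp.trans_le hd
  have hd1 : 1 - (1 - p) * x ≤ 1 := by nlinarith
  have hu0 : 0 ≤ 1 - x := by linarith
  have hid : ((1 - x) / (1 - (1 - p) * x)) ^ 2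
      = (1 - x) + ((1 - 2 * p) * (x * (1 - x) ^ 2) - p ^ 2 * x ^ 2 * (1 - x))
        / (1 - (1 - p) * x) ^ 2 := by
    rw [div_pow, div_eq_iff (pow_ne_zero 2 hd0.ne'), add_mul,
      div_mul_cancel₀ _ (pow_ne_zero 2 hd0.ne')]
    ring
  have hd2lb : p * ((1 - p) * (1 - x)) ≤ (1 - (1 - p) * x) ^ 2 := by
    nlinarith [sq_nonneg (p - (1 - p) * (1 - x)),
      mul_nonneg (mul_nonneg hp.le (by linarith : (0:ℝ) ≤ 1 - p)) hu0]
  have hb1 : (1 - 2 * p) * (x * (1 - x) ^ 2)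
      ≤ (1 - 2 * p) * (x * (1 - x) ^ 2) / (1 - (1 - p) * x) ^ 2 := by
    rw [le_div_iff₀ (by positivity)]
    have hc0 : 0 ≤ (1 - 2 * p) * (x * (1 - x) ^ 2) :=
      mul_nonneg (by linarith) (mul_nonneg hx0 (sq_nonneg _))
    nlinarith [mul_le_of_le_one_right hc0 (by nlinarith : (1 - (1 - p) * x) ^ 2 ≤ 1)]
  have hb2 : p ^ 2 * x ^ 2 * (1 - x) / (1 - (1 - p) * x) ^ 2 ≤ 2 * p := by
    rw [div_le_iff₀ (by positivity)]
    have h1 : 2 * p * (p * ((1 - p) * (1 - x))) ≤ 2 * p * (1 - (1 - p) * x) ^ 2 :=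
      mul_le_mul_of_nonneg_left hd2lb (by positivity)
    nlinarith [mul_nonneg (mul_nonneg (sq_nonneg p) hu0)
      (by nlinarith : (0:ℝ) ≤ 2 * (1 - p) - x ^ 2)]
  rw [hid, sub_div]
  linarith

private lemma pd_aux_lip (p0 p q x : ℝ) (hp0 : 0 < p0) (hpp0 : p0 ≤ p)
    (hpq : p ≤ q) (hq1 : q ≤ 1) (hx0 : 0 ≤ x) (hx1 : x ≤ 1) :
    ((1 - x) / (1 - (1 - p) * x)) ^ 2
      ≤ ((1 - x) / (1 - (1 - q) * x)) ^ 2 + 2 * ((q - p) / p0 ^ 2) := by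
  have hp : 0 < p := hp0.trans_le hpp0
  have hq : 0 < q := hp.trans_le hpq
  have hdp : p ≤ 1 - (1 - p) * x := by nlinarith
  have hdq : q ≤ 1 - (1 - q) * x := by nlinarith
  have hdp0 : 0 < 1 - (1 - p) * x := hp.trans_le hdp
  have hdq0 : 0 < 1 - (1 - q) * x := hq.trans_le hdq
  have hp0dp : p0 ≤ 1 - (1 - p) * x := hpp0.trans hdp
  have hp0dq : p0 ≤ 1 - (1 - q) * x := (hpp0.trans hpq).trans hdq
  have hu0 : 0 ≤ 1 - x := by linarith
  set A := (1 - x) / (1 - (1 - p) * x) with hA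
  set B := (1 - x) / (1 - (1 - q) * x) with hB
  have hA1 : A ≤ 1 := by
    rw [hA, div_le_one hdp0]; nlinarith
  have hB1 : B ≤ 1 := by
    rw [hB, div_le_one hdq0]; nlinarith
  have hB0 : 0 ≤ B := div_nonneg hu0 hdq0.le
  have hA0 : 0 ≤ A := div_nonneg hu0 hdp0.le
  have hBA : B ≤ A := by
    rw [hA, hB, div_le_div_iff₀ hdq0 hdp0]
    nlinarith [mul_nonneg hu0 (mul_nonneg (sub_nonneg.2 hpq) hx0)]
  have hABle : A - B ≤ (q - p) / p0 ^ 2 := by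
    rw [hA, hB, div_sub_div _ _ (ne_of_gt hdp0) (ne_of_gt hdq0),
      div_le_div_iff₀ (mul_pos hdp0 hdq0) (by positivity : (0:ℝ) < p0 ^ 2)]
    have hdd : p0 * p0 ≤ (1 - (1 - p) * x) * (1 - (1 - q) * x) :=
      mul_le_mul hp0dp hp0dq hp0.le hdp0.le
    nlinarith [mul_nonneg (sub_nonneg.2 hpq) (sub_nonneg.2 hdd),
      mul_nonneg (mul_nonneg (sub_nonneg.2 hpq) (sq_nonneg p0))
        (by nlinarith : (0:ℝ) ≤ 1 - (1 - x) * x)]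
  have key2 : (A - B) * (A + B) ≤ ((q - p) / p0 ^ 2) * 2 :=
    mul_le_mul hABle (by linarith) (by linarith)
      (div_nonneg (by linarith) (by positivity))
  nlinarith [key2]

/-- there is a unique `p* ∈ (0,1)` with `π'(p*) = 1`; moreover `π' > 1` on
`(0,p*)` and `π' < 1` on `(p*,1)`. -/
theorem pdRatio_tipping_point
    (T : ℝ) (hT : 0 < T) (G : ℝ → ℝ)
    (hGmono : MonotoneOn G (Set.Icc 0 T))
    (hGrc : ∀ t ∈ Set.Ico 0 T, ContinuousWithinAt G (Set.Ici t) t)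
    (hGrange : ∀ t ∈ Set.Icc 0 T, G t ∈ Set.Icc (0:ℝ) 1)
    (hG0 : G 0 = 0) (hGT : G T = 1)
    (hInt : 0 < ∫ t in (0:ℝ)..T, (1 - G t))
    (hInt2 : 0 < ∫ t in (0:ℝ)..T, G t * (1 - G t)) :
    ∃ pstar ∈ Set.Ioo (0:ℝ) 1,
      pdRatioDeriv G T pstar = 1 ∧
      (∀ q ∈ Set.Ioo (0:ℝ) pstar, 1 < pdRatioDeriv G T q) ∧
      (∀ q ∈ Set.Ioo pstar 1, pdRatioDeriv G T q < 1) ∧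
      (∀ q ∈ Set.Ioo (0:ℝ) 1, pdRatioDeriv G T q = 1 → q = pstar) := by
  have hT0 : (0:ℝ) ≤ T := hT.le
  have huIcc : Set.uIcc (0:ℝ) T = Set.Icc 0 T := uIcc_of_le hT0
  set I : ℝ := ∫ t in (0:ℝ)..T, (1 - G t) with hI_def
  set K : ℝ := ∫ t in (0:ℝ)..T, G t * (1 - G t) ^ 2 with hK_def
  set F : ℝ → ℝ := fun p => ∫ t in (0:ℝ)..T, ((1 - G t) / (1 - (1 - p) * G t)) ^ 2
    with hF_def
  have hpd : ∀ q, pdRatioDeriv G T q = F q / I := fun q => rfl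
  -- integrability facts
  have intG : IntervalIntegrable G volume 0 T := by
    apply MonotoneOn.intervalIntegrable; rwa [huIcc]
  have intG2 : IntervalIntegrable (fun t => (G t) ^ 2) volume 0 T := by
    apply MonotoneOn.intervalIntegrable
    rw [huIcc]
    intro s hs t ht hst
    have h1 := hGmono hs ht hst
    have h2 := (hGrange s hs).1
    simp only
    nlinarith
  have intG3 : IntervalIntegrable (fun t => (G t) ^ 3) volume 0 T := by
    apply MonotoneOn.intervalIntegrable
    rw [huIcc]
    intro s hs t ht hst
    have h1 := hGmono hs ht hst
    have h2 := (hGrange s hs).1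
    simp only
    nlinarith [mul_nonneg (sub_nonneg.2 h1)
      (by nlinarith : (0:ℝ) ≤ (G t) ^ 2 + G s * G t + (G s) ^ 2)]
  have intU : IntervalIntegrable (fun t => 1 - G t) volume 0 T :=
    intervalIntegrable_const.sub intG
  have intGU : IntervalIntegrable (fun t => G t * (1 - G t)) volume 0 T := by
    have h : (fun t => G t * (1 - G t)) = fun t => G t - (G t) ^ 2 := by
      funext t; ring
    rw [h]; exact intG.sub intG2
  have intK : IntervalIntegrable (fun t => G t * (1 - G t) ^ 2) volume 0 T := by
    have h : (fun t => G t * (1 - G t) ^ 2)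
        = fun t => (G t - 2 * (G t) ^ 2) + (G t) ^ 3 := by
      funext t; ring
    rw [h]; exact (intG.sub (intG2.const_mul 2)).add intG3
  have intF : ∀ p : ℝ, 0 < p → p ≤ 1 →
      IntervalIntegrable (fun t => ((1 - G t) / (1 - (1 - p) * G t)) ^ 2) volume 0 T := by
    intro p hp hp1
    apply AntitoneOn.intervalIntegrable
    rw [huIcc]
    intro s hs t ht hst
    exact pd_aux_anti p (G s) (G t) hp hp1 (hGrange s hs).1 (hGrange t ht).2
      (hGmono hs ht hst)
  -- K > 0
  have hK0 : 0 < K := by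
    by_contra hcon
    push_neg at hcon
    have hnn : ∀ t ∈ Set.Icc (0:ℝ) T, 0 ≤ G t * (1 - G t) ^ 2 := fun t ht =>
      mul_nonneg (hGrange t ht).1 (sq_nonneg _)
    have hKnn : 0 ≤ K := intervalIntegral.integral_nonneg hT0 hnn
    have hKz : K = 0 := le_antisymm hcon hKnn
    rw [hK_def, intervalIntegral.integral_of_le hT0] at hKz
    have hnnae : 0 ≤ᵐ[volume.restrict (Set.Ioc (0:ℝ) T)] fun t => G t * (1 - G t) ^ 2 :=
      ae_restrict_of_forall_mem measurableSet_Ioc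
        fun t ht => hnn t (Set.Ioc_subset_Icc_self ht)
    have hae := (integral_eq_zero_iff_of_nonneg_ae hnnae intK.1).mp hKz
    have h2 : ∫ t in Set.Ioc (0:ℝ) T, G t * (1 - G t) = 0 := by
      have heq : (fun t => G t * (1 - G t)) =ᵐ[volume.restrict (Set.Ioc (0:ℝ) T)]
          (0 : ℝ → ℝ) := by
        filter_upwards [hae] with t ht
        simp only [Pi.zero_apply] at ht ⊢
        rcases mul_eq_zero.mp ht with h | h
        · rw [h, zero_mul]
        · rw [pow_eq_zero_iff (two_ne_zero)] at h
          rw [h, mul_zero]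
      calc ∫ t in Set.Ioc (0:ℝ) T, G t * (1 - G t)
          = ∫ t in Set.Ioc (0:ℝ) T, (0:ℝ) := integral_congr_ae heq
        _ = 0 := by simp
    rw [intervalIntegral.integral_of_le hT0] at hInt2
    linarith
  -- strict antitonicity with quantitative gap
  have hmono : ∀ p q : ℝ, 0 < p → p < q → q ≤ 1 → F q + (q - p) * p * K ≤ F p := by
    intro p q hp hpq hq1
    have hp1 : p ≤ 1 := (hpq.trans_le hq1).le
    have hq : 0 < q := hp.trans hpq
    have hint1 := intF q hq hq1
    have hint2 := intF p hp hp1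
    have hpt : ∀ t ∈ Set.Icc (0:ℝ) T,
        ((1 - G t) / (1 - (1 - q) * G t)) ^ 2 + (q - p) * p * (G t * (1 - G t) ^ 2)
          ≤ ((1 - G t) / (1 - (1 - p) * G t)) ^ 2 := fun t ht =>
      pd_aux_mono p q (G t) hp hpq hq1 (hGrange t ht).1 (hGrange t ht).2
    have key := intervalIntegral.integral_mono_on hT0
      (hint1.add (intK.const_mul ((q - p) * p))) hint2 hpt
    rwa [intervalIntegral.integral_add hint1 (intK.const_mul ((q - p) * p)),
      intervalIntegral.integral_const_mul] at key
  have hmono' : ∀ p q : ℝ, 0 < p → p ≤ q → q ≤ 1 → F q ≤ F p := by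
    intro p q hp hpq hq1
    rcases eq_or_lt_of_le hpq with rfl | h
    · exact le_refl _
    · have := hmono p q hp h hq1
      nlinarith [mul_nonneg (mul_nonneg (by linarith : (0:ℝ) ≤ q - p) hp.le) hK0.le]
  -- lower bound near 0
  have hlow : ∀ p : ℝ, 0 < p → p ≤ 1 / 2 → I + (1 - 2 * p) * K - 2 * p * T ≤ F p := by
    intro p hp hp2
    have hp1 : p ≤ 1 := by linarith
    have hintR := intF p hp hp1
    have hintL : IntervalIntegrable
        (fun t => (1 - G t) + (1 - 2 * p) * (G t * (1 - G t) ^ 2) - 2 * p) volume 0 T :=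
      (intU.add (intK.const_mul _)).sub intervalIntegrable_const
    have hpt : ∀ t ∈ Set.Icc (0:ℝ) T,
        (1 - G t) + (1 - 2 * p) * (G t * (1 - G t) ^ 2) - 2 * p
          ≤ ((1 - G t) / (1 - (1 - p) * G t)) ^ 2 := fun t ht =>
      pd_aux_low p (G t) hp hp2 (hGrange t ht).1 (hGrange t ht).2
    have key := intervalIntegral.integral_mono_on hT0 hintL hintR hpt
    rw [intervalIntegral.integral_sub (intU.add (intK.const_mul _)) intervalIntegrable_const,
      intervalIntegral.integral_add intU (intK.const_mul _),
      intervalIntegral.integral_const_mul, intervalIntegral.integral_const] at key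
    have hs : (T - 0) • (2 * p) = 2 * p * T := by rw [smul_eq_mul]; ring
    rw [hs] at key
    exact key
  -- choice of p0
  have hTK : (0:ℝ) < T + K := by linarith
  set p0 : ℝ := K / (4 * (T + K)) with hp0_def
  have hp0 : 0 < p0 := div_pos hK0 (by linarith)
  have hp0half : p0 ≤ 1 / 2 := by
    rw [hp0_def, div_le_iff₀ (by linarith)]
    nlinarith
  have hp0lt1 : p0 < 1 := hp0half.trans_lt (by norm_num)
  have hFp0 : I < F p0 := by
    have h1 := hlow p0 hp0 hp0half
    have h2 : 2 * p0 * (T + K) = K / 2 := by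
      rw [hp0_def]; field_simp; ring
    nlinarith
  -- F 1 < I
  have hF1 : F 1 < I := by
    have h1 : F 1 = ∫ t in (0:ℝ)..T, ((1 - G t) - G t * (1 - G t)) := by
      rw [hF_def]
      apply intervalIntegral.integral_congr
      intro t ht
      simp only
      have h2 : (1 : ℝ) - (1 - 1) * G t = 1 := by ring
      rw [h2]
      ring
    rw [h1, intervalIntegral.integral_sub intU intGU]
    have h3 : (0:ℝ) < ∫ t in (0:ℝ)..T, G t * (1 - G t) := hInt2
    linarith
  -- Lipschitz bound on [p0, 1]
  have hbound : ∀ p q : ℝ, p0 ≤ p → p ≤ q → q ≤ 1 →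
      F p ≤ F q + T * (2 * ((q - p) / p0 ^ 2)) := by
    intro p q hpp0 hpq hq1
    have hp : 0 < p := hp0.trans_le hpp0
    have hq : 0 < q := hp.trans_le hpq
    have hp1 : p ≤ 1 := hpq.trans hq1
    have hint1 := intF p hp hp1
    have hint2 := intF q hq hq1
    have hpt : ∀ t ∈ Set.Icc (0:ℝ) T,
        ((1 - G t) / (1 - (1 - p) * G t)) ^ 2
          ≤ ((1 - G t) / (1 - (1 - q) * G t)) ^ 2 + 2 * ((q - p) / p0 ^ 2) := fun t ht =>
      pd_aux_lip p0 p q (G t) hp0 hpp0 hpq hq1 (hGrange t ht).1 (hGrange t ht).2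
    have key := intervalIntegral.integral_mono_on hT0 hint1
      (hint2.add intervalIntegrable_const) hpt
    rw [intervalIntegral.integral_add hint2 intervalIntegrable_const,
      intervalIntegral.integral_const] at key
    have hs : (T - 0) • (2 * ((q - p) / p0 ^ 2)) = T * (2 * ((q - p) / p0 ^ 2)) := by
      rw [smul_eq_mul]; ring
    rw [hs] at key
    exact key
  -- continuity of F on [p0, 1]
  have hcont : ContinuousOn F (Set.Icc p0 1) := by
    have hCnn : (0:ℝ) ≤ 2 * T / p0 ^ 2 := by positivity
    apply LipschitzOnWith.continuousOn (K := (⟨2 * T / p0 ^ 2, hCnn⟩ : NNReal))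
    refine lipschitzOnWith_iff_dist_le_mul.2 ?_
    have main : ∀ p q : ℝ, p ∈ Set.Icc p0 1 → q ∈ Set.Icc p0 1 → p ≤ q →
        dist (F p) (F q) ≤ (2 * T / p0 ^ 2) * dist p q := by
      intro p q hp hq hpq
      have h1 := hbound p q hp.1 hpq hq.2
      have h2 := hmono' p q (hp0.trans_le hp.1) hpq hq.2
      rw [Real.dist_eq, Real.dist_eq, abs_of_nonneg (by linarith : (0:ℝ) ≤ F p - F q),
        abs_of_nonpos (by linarith : p - q ≤ 0)]
      have h3 : T * (2 * ((q - p) / p0 ^ 2)) = (2 * T / p0 ^ 2) * (q - p) := by ring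
      rw [h3] at h1
      linarith
    intro p hp q hq
    rcases le_total p q with h | h
    · exact main p q hp hq h
    · rw [dist_comm (F p) (F q), dist_comm p q]
      exact main q p hq hp h
  -- IVT
  have hsub : I ∈ Set.Ioo (F 1) (F p0) := ⟨hF1, hFp0⟩
  obtain ⟨pstar, hpmem, hFps⟩ := intermediate_value_Ioo' hp0lt1.le hcont hsub
  have hps0 : 0 < pstar := hp0.trans hpmem.1
  have hps1 : pstar < 1 := hpmem.2
  have hIne : I ≠ 0 := ne_of_gt hInt
  refine ⟨pstar, ⟨hps0, hps1⟩, ?_, ?_, ?_, ?_⟩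
  · rw [hpd, hFps, div_self hIne]
  · intro q hq
    have hgap : 0 < (pstar - q) * q * K :=
      mul_pos (mul_pos (by linarith [hq.2]) hq.1) hK0
    have h1 := hmono q pstar hq.1 hq.2 hps1.le
    rw [hpd, one_lt_div hInt, ← hFps]
    linarith
  · intro q hq
    have hgap : 0 < (q - pstar) * pstar * K :=
      mul_pos (mul_pos (by linarith [hq.1]) hps0) hK0
    have h1 := hmono pstar q hps0 hq.1 hq.2.le
    rw [hpd, div_lt_one hInt, ← hFps]
    linarith
  · intro q hq hq1
    have hFq : F q = I := by
      rw [hpd, div_eq_one_iff_eq hIne] at hq1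
      exact hq1
    by_contra hne
    rcases lt_or_gt_of_ne hne with h | h
    · have hgap : 0 < (pstar - q) * q * K :=
        mul_pos (mul_pos (by linarith) hq.1) hK0
      have h1 := hmono q pstar hq.1 h hps1.le
      rw [hFq, hFps] at h1
      linarith
    · have hgap : 0 < (q - pstar) * pstar * K :=
        mul_pos (mul_pos (by linarith) hps0) hK0
      have h1 := hmono pstar q hps0 h hq.2.le
      rw [hFq, hFps] at h1
      linarith
end
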